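/- Let c₄₀ be a real number and define f(x,y) = y² + x²y + c₄₀x⁴. Then for all real numbers x̄, ȳ, u, v, with (x, y) = (x̄, −(1/2)x̄² − ȳ), the following exact identity holds: f_yy(x,y)·(x̄u + v)² − 2 f_xy(x,y)·u·(x̄u + v) + f_xx(x,y)·u² = 2·(v² + ((6c₄₀ − 3/2)x̄² − ȳ)u²). That is, under the coordinate change x = x̄, y = −(1/2)x̄² − ȳ (so that dx = dx̄ and dy = −x̄dx̄ − dȳ), the asymptotic binary differential equation f_yy dy² + 2f_xy dx dy + f_xx dx² = 0 of the surface z = f(x,y) is transformed into dȳ² + (−ȳ + λx̄²)dx̄² = 0 with λ = 6c₄₀ − 3/2. -/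

import Mathlib

/-- Partial derivative in the first variable. -/
noncomputable def pdx (f : ℝ × ℝ → ℝ) : ℝ × ℝ → ℝ := fun P => deriv (fun s => f (s, P.2)) P.1

/-- Partial derivative in the second variable. -/
noncomputable def pdy (f : ℝ × ℝ → ℝ) : ℝ × ℝ → ℝ := fun P => deriv (fun t => f (P.1, t)) P.2

/-- under the coordinate change `x = x̄`, `y = −(1/2)x̄² − ȳ`, the
asymptotic BDE `f_yy dy² + 2f_xy dx dy + f_xx dx² = 0` of `z = y² + x²y + c₄₀x⁴`
becomes `dȳ² + (−ȳ + λx̄²)dx̄² = 0` with `λ = 6c₄₀ − 3/2`: evaluating the quadratic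
form on the transformed direction `(u, −x̄u − v)` gives exactly
`2(v² + ((6c₄₀ − 3/2)x̄² − ȳ)u²)`. -/
theorem stmt14 (c40 : ℝ) :
    let f : ℝ × ℝ → ℝ := fun P => P.2 ^ 2 + P.1 ^ 2 * P.2 + c40 * P.1 ^ 4
    ∀ xb yb u v : ℝ,
      pdy (pdy f) (xb, -(1 / 2) * xb ^ 2 - yb) * (xb * u + v) ^ 2
        - 2 * pdy (pdx f) (xb, -(1 / 2) * xb ^ 2 - yb) * u * (xb * u + v)
        + pdx (pdx f) (xb, -(1 / 2) * xb ^ 2 - yb) * u ^ 2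
      = 2 * (v ^ 2 + ((6 * c40 - 3 / 2) * xb ^ 2 - yb) * u ^ 2) := by
  intro f xb yb u v
  have hx : pdx f = fun P => 2 * P.1 * P.2 + 4 * c40 * P.1 ^ 3 := by
    funext P
    have h : HasDerivAt (fun s : ℝ => P.2 ^ 2 + s ^ 2 * P.2 + c40 * s ^ 4)
        (2 * P.1 * P.2 + 4 * c40 * P.1 ^ 3) P.1 := by
      have := (((hasDerivAt_pow 2 P.1).mul_const P.2).const_add (P.2 ^ 2)).add
        ((hasDerivAt_pow 4 P.1).const_mul c40)
      exact this.congr_deriv (by norm_num; ring)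
    exact h.deriv
  have hy : pdy f = fun P => 2 * P.2 + P.1 ^ 2 := by
    funext P
    have h : HasDerivAt (fun t : ℝ => t ^ 2 + P.1 ^ 2 * t + c40 * P.1 ^ 4)
        (2 * P.2 + P.1 ^ 2) P.2 := by
      have := ((hasDerivAt_pow 2 P.2).add ((hasDerivAt_id P.2).const_mul (P.1 ^ 2))).add_const
        (c40 * P.1 ^ 4)
      exact this.congr_deriv (by norm_num)
    exact h.deriv
  have hyy : pdy (pdy f) (xb, -(1 / 2) * xb ^ 2 - yb) = 2 := by
    rw [hy]; unfold pdy
    have h : ∀ y0 : ℝ, HasDerivAt (fun t : ℝ => 2 * t + xb ^ 2) 2 y0 := fun y0 => by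
      simpa using ((hasDerivAt_id y0).const_mul 2).add_const (xb ^ 2)
    exact (h _).deriv
  have hxy : pdy (pdx f) (xb, -(1 / 2) * xb ^ 2 - yb) = 2 * xb := by
    rw [hx]; unfold pdy
    have h : ∀ y0 : ℝ, HasDerivAt (fun t : ℝ => 2 * xb * t + 4 * c40 * xb ^ 3) (2 * xb) y0 :=
      fun y0 => by simpa using ((hasDerivAt_id y0).const_mul (2 * xb)).add_const (4 * c40 * xb ^ 3)
    exact (h _).deriv
  have hxx : pdx (pdx f) (xb, -(1 / 2) * xb ^ 2 - yb)
      = 2 * (-(1 / 2) * xb ^ 2 - yb) + 12 * c40 * xb ^ 2 := by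
    rw [hx]; unfold pdx
    have h : HasDerivAt (fun s : ℝ => 2 * s * (-(1 / 2) * xb ^ 2 - yb) + 4 * c40 * s ^ 3)
        (2 * (-(1 / 2) * xb ^ 2 - yb) + 12 * c40 * xb ^ 2) xb := by
      have := (((hasDerivAt_id xb).const_mul 2).mul_const (-(1 / 2) * xb ^ 2 - yb)).add
        ((hasDerivAt_pow 3 xb).const_mul (4 * c40))
      exact this.congr_deriv (by norm_num; ring)
    exact h.deriv
  rw [hyy, hxy, hxx]; ring
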